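/- Let (X,d) and (Y,ρ) be semimetric spaces with continuous, strictly increasing (in both arguments) triangle functions Φ₁ and Φ₂ respectively, and let f: X→Y be η-quasisymmetric. If A ⊆ B ⊆ X with 0 < diam A and diam B < ∞, then diam f(B) < ∞ and diam f(A)/diam f(B) ≤ η(diam A / φ₁⁻¹(diam B)), where φ₁(t) = Φ₁(t,t). -/
import Mathlib


open Set Filter Topology

structure IsSemimetric {X : Type*} (d : X → X → ℝ) : Prop where
  nonneg : ∀ x y, 0 ≤ d x y
  eq_iff : ∀ x y, d x y = 0 ↔ x = y
  symm : ∀ x y, d x y = d y x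

/-- `η` is a homeomorphism of `[0,∞)` onto itself (increasing, `η 0 = 0`). -/
structure IsQSHomeo (η : ℝ → ℝ) : Prop where
  maps : ∀ t, 0 ≤ t → 0 ≤ η t
  zero : η 0 = 0
  strictMonoOn : StrictMonoOn η (Set.Ici 0)
  surjOn : ∀ s, 0 ≤ s → ∃ t, 0 ≤ t ∧ η t = s
  continuousOn : ContinuousOn η (Set.Ici 0)

/-- `f` is an `η`-quasisymmetric mapping between the semimetric spaces `(X,d)` and `(Y,ρ)`. -/
def IsQuasisymmetric {X Y : Type*} (d : X → X → ℝ) (ρ : Y → Y → ℝ)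
    (η : ℝ → ℝ) (f : X → Y) : Prop :=
  IsQSHomeo η ∧ ∀ (x a b : X) (t : ℝ), 0 < t →
    d x a ≤ t * d x b → ρ (f x) (f a) ≤ η t * ρ (f x) (f b)

structure IsTriangleFunction {X : Type*} (d : X → X → ℝ) (Φ : ℝ → ℝ → ℝ) : Prop where
  symm : ∀ u v, Φ u v = Φ v u
  mono : ∀ u u' v v', 0 ≤ u → u ≤ u' → 0 ≤ v → v ≤ v' → Φ u v ≤ Φ u' v'
  zero : Φ 0 0 = 0
  tri : ∀ x y z, d x y ≤ Φ (d x z) (d y z)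

def IsPtolemaic {X : Type*} (d : X → X → ℝ) : Prop :=
  ∀ x y z t : X, d x z * d t y ≤ d x y * d t z + d x t * d y z

def distSet {X : Type*} (d : X → X → ℝ) (A : Set X) : Set ℝ :=
  {r | ∃ x ∈ A, ∃ y ∈ A, r = d x y}

noncomputable def sdiam {X : Type*} (d : X → X → ℝ) (A : Set X) : ℝ :=
  sSup (distSet d A)

def spectrum' {X : Type*} (d : X → X → ℝ) : Set ℝ := {r | ∃ x y : X, r = d x y}

def IsWeakSimilarity {X Y : Type*} (d : X → X → ℝ) (ρ : Y → Y → ℝ)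
    (f : X → Y) (φ : ℝ → ℝ) : Prop :=
  Function.Bijective f ∧ StrictMonoOn φ (spectrum' d) ∧
    φ '' spectrum' d = spectrum' ρ ∧ ∀ x y, φ (d x y) = ρ (f x) (f y)

/-- The topology `τ_d` generated by a semimetric `d`. -/
def tauD {X : Type*} (d : X → X → ℝ) : TopologicalSpace X where
  IsOpen A := ∀ a ∈ A, ∃ r > 0, {x | d a x < r} ⊆ A
  isOpen_univ := fun _ _ => ⟨1, one_pos, fun _ _ => trivial⟩
  isOpen_inter := fun A B hA hB a ha => by
    obtain ⟨r1, hr1, h1⟩ := hA a ha.1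
    obtain ⟨r2, hr2, h2⟩ := hB a ha.2
    refine ⟨min r1 r2, lt_min hr1 hr2, fun x hx => ⟨h1 ?_, h2 ?_⟩⟩
    · have hx' : d a x < min r1 r2 := hx
      exact lt_of_lt_of_le hx' (min_le_left r1 r2)
    · have hx' : d a x < min r1 r2 := hx
      exact lt_of_lt_of_le hx' (min_le_right r1 r2)
  isOpen_sUnion := fun S hS a ha => by
    obtain ⟨A, hA, haA⟩ := ha
    obtain ⟨r, hr, h⟩ := hS A hA a haA
    exact ⟨r, hr, fun x hx => ⟨A, hA, h hx⟩⟩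

theorem stmt_15 {X Y : Type*} (d : X → X → ℝ) (ρ : Y → Y → ℝ) (η : ℝ → ℝ) (f : X → Y)
    (Φ₁ Φ₂ : ℝ → ℝ → ℝ) (ψ : ℝ → ℝ)
    (hd : IsSemimetric d) (hρ : IsSemimetric ρ)
    (hT1 : IsTriangleFunction d Φ₁) (hT2 : IsTriangleFunction ρ Φ₂)
    (hc1 : ContinuousOn (fun p : ℝ × ℝ => Φ₁ p.1 p.2) (Set.Ici 0 ×ˢ Set.Ici 0))
    (hc2 : ContinuousOn (fun p : ℝ × ℝ => Φ₂ p.1 p.2) (Set.Ici 0 ×ˢ Set.Ici 0))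
    (hs1 : ∀ v, 0 ≤ v → StrictMonoOn (fun u => Φ₁ u v) (Set.Ici 0))
    (hs2 : ∀ v, 0 ≤ v → StrictMonoOn (fun u => Φ₂ u v) (Set.Ici 0))
    (hq : IsQuasisymmetric d ρ η f)
    (hψ1 : ∀ t, 0 ≤ t → ψ (Φ₁ t t) = t) (hψ2 : ∀ s, 0 ≤ s → Φ₁ (ψ s) (ψ s) = s)
    (A B : Set X) (hAB : A ⊆ B)
    (hA : 0 < sdiam d A) (hB : BddAbove (distSet d B)) :
    BddAbove (distSet ρ (f '' B)) ∧
      sdiam ρ (f '' A) / sdiam ρ (f '' B) ≤ η (sdiam d A / ψ (sdiam d B)) := by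
  obtain ⟨hη, hqs⟩ := hq
  -- a pair in A at positive distance
  have hAne : ∃ x₀ ∈ A, ∃ a₀ ∈ A, 0 < d x₀ a₀ := by
    by_contra h
    push_neg at h
    have : sdiam d A ≤ 0 := Real.sSup_le (by rintro r ⟨x, hx, y, hy, rfl⟩; exact h x hx y hy) le_rfl
    linarith
  obtain ⟨x₀, hx₀A, a₀, ha₀A, hδ⟩ := hAne
  have hx₀B := hAB hx₀A
  have ha₀B := hAB ha₀A
  have hBA_sub : distSet d A ⊆ distSet d B := by
    rintro r ⟨x, hx, y, hy, rfl⟩; exact ⟨x, hAB hx, y, hAB hy, rfl⟩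
  have hbddA : BddAbove (distSet d A) := hB.mono hBA_sub
  have hDAB : sdiam d A ≤ sdiam d B :=
    csSup_le_csSup hB ⟨_, ⟨x₀, hx₀A, a₀, ha₀A, rfl⟩⟩ hBA_sub
  have hDBpos : 0 < sdiam d B := lt_of_lt_of_le hA hDAB
  have hdxy_le : ∀ x ∈ B, ∀ y ∈ B, d x y ≤ sdiam d B := fun x hx y hy =>
    le_csSup hB ⟨x, hx, y, hy, rfl⟩
  have hDAnn : 0 ≤ sdiam d A := hA.le
  -- diam B ≤ Φ₁ (diam B) (diam B)
  have hΦnn : ∀ u v : ℝ, 0 ≤ u → 0 ≤ v → 0 ≤ Φ₁ u v := by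
    intro u v hu hv
    rw [← hT1.zero]
    exact hT1.mono 0 u 0 v le_rfl hu le_rfl hv
  have hφDB : sdiam d B ≤ Φ₁ (sdiam d B) (sdiam d B) := by
    apply Real.sSup_le
    · rintro r ⟨x, hx, y, hy, rfl⟩
      have h1 : d x y ≤ Φ₁ (d x y) (d y y) := hT1.tri x y y
      have h2 : d y y = 0 := (hd.eq_iff y y).mpr rfl
      rw [h2] at h1
      exact h1.trans (hT1.mono _ _ _ _ (hd.nonneg x y) (hdxy_le x hx y hy) le_rfl hDBpos.le)
    · exact hΦnn _ _ hDBpos.le hDBpos.le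
  -- IVT to find t₀ with Φ₁ t₀ t₀ = diam B
  have hφcont : ContinuousOn (fun t : ℝ => Φ₁ t t) (Set.Ici 0) := by
    have hdiag : ContinuousOn (fun t : ℝ => ((t, t) : ℝ × ℝ)) (Set.Ici 0) :=
      (continuous_id.prodMk continuous_id).continuousOn
    exact hc1.comp hdiag (fun t ht => ⟨ht, ht⟩)
  have hIVT : ∃ t₀ ∈ Set.Icc (0 : ℝ) (sdiam d B), Φ₁ t₀ t₀ = sdiam d B := by
    have h := intermediate_value_Icc hDBpos.le
      ((hφcont.mono (Set.Icc_subset_Ici_self)) : ContinuousOn (fun t : ℝ => Φ₁ t t) (Set.Icc 0 (sdiam d B)))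
    have hmem : sdiam d B ∈ Set.Icc (Φ₁ 0 0) (Φ₁ (sdiam d B) (sdiam d B)) := by
      rw [hT1.zero]; exact ⟨hDBpos.le, hφDB⟩
    obtain ⟨t₀, ht₀, heq⟩ := h hmem
    exact ⟨t₀, ht₀, heq⟩
  obtain ⟨t₀, ht₀mem, ht₀eq⟩ := hIVT
  have ht₀nn : (0 : ℝ) ≤ t₀ := ht₀mem.1
  have hψDB : ψ (sdiam d B) = t₀ := by rw [← ht₀eq]; exact hψ1 t₀ ht₀nn
  have ht₀pos : 0 < t₀ := by
    rcases lt_or_eq_of_le ht₀nn with h | h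
    · exact h
    · exfalso; rw [← h, hT1.zero] at ht₀eq; linarith
  -- key: points in B at distance > u from any x, for u < t₀
  have hkey : ∀ x ∈ B, ∀ u : ℝ, 0 ≤ u → u < t₀ → ∃ b ∈ B, u < d x b := by
    intro x hx u hu hut
    by_contra h
    push_neg at h
    have hbound : ∀ r ∈ distSet d B, r ≤ Φ₁ u u := by
      rintro r ⟨y, hy, z, hz, rfl⟩
      calc d y z ≤ Φ₁ (d y x) (d z x) := hT1.tri y z x
        _ ≤ Φ₁ u u := hT1.mono _ _ _ _ (hd.nonneg y x)
            (by rw [hd.symm]; exact h y hy) (hd.nonneg z x)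
            (by rw [hd.symm]; exact h z hz)
    have h1 : sdiam d B ≤ Φ₁ u u := Real.sSup_le hbound (hΦnn _ _ hu hu)
    have h2 : Φ₁ u u < Φ₁ t₀ t₀ := by
      calc Φ₁ u u < Φ₁ t₀ u := hs1 u hu hu ht₀nn hut
        _ = Φ₁ u t₀ := hT1.symm _ _
        _ ≤ Φ₁ t₀ t₀ := hT1.mono _ _ _ _ hu hut.le ht₀nn le_rfl
    rw [ht₀eq] at h2
    linarith
  -- boundedness of image distances
  have hM : ∀ y ∈ B, ρ (f x₀) (f y) ≤ η (sdiam d B / d x₀ a₀) * ρ (f x₀) (f a₀) := by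
    intro y hy
    apply hqs x₀ y a₀ (sdiam d B / d x₀ a₀) (div_pos hDBpos hδ)
    rw [div_mul_cancel₀ _ hδ.ne']
    exact hdxy_le x₀ hx₀B y hy
  have hM0 : 0 ≤ η (sdiam d B / d x₀ a₀) * ρ (f x₀) (f a₀) :=
    le_trans (hρ.nonneg (f x₀) (f x₀)) (hM x₀ hx₀B)
  have hΦ₂nn : ∀ u v : ℝ, 0 ≤ u → 0 ≤ v → 0 ≤ Φ₂ u v := by
    intro u v hu hv
    rw [← hT2.zero]
    exact hT2.mono 0 u 0 v le_rfl hu le_rfl hv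
  have hbddB : BddAbove (distSet ρ (f '' B)) := by
    refine ⟨Φ₂ (η (sdiam d B / d x₀ a₀) * ρ (f x₀) (f a₀))
      (η (sdiam d B / d x₀ a₀) * ρ (f x₀) (f a₀)), ?_⟩
    rintro r ⟨u, ⟨y, hy, rfl⟩, v, ⟨z, hz, rfl⟩, rfl⟩
    calc ρ (f y) (f z) ≤ Φ₂ (ρ (f y) (f x₀)) (ρ (f z) (f x₀)) := hT2.tri _ _ _
      _ ≤ _ := hT2.mono _ _ _ _ (hρ.nonneg _ _)
          (by rw [hρ.symm]; exact hM y hy) (hρ.nonneg _ _)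
          (by rw [hρ.symm]; exact hM z hz)
  refine ⟨hbddB, ?_⟩
  have hDfB0 : 0 ≤ sdiam ρ (f '' B) := by
    apply le_csSup hbddB
    exact ⟨f x₀, ⟨x₀, hx₀B, rfl⟩, f x₀, ⟨x₀, hx₀B, rfl⟩, ((hρ.eq_iff _ _).mpr rfl).symm⟩
  rw [hψDB]
  have hηnn : 0 ≤ η (sdiam d A / t₀) := hη.maps _ (div_nonneg hDAnn ht₀nn)
  have hmain : sdiam ρ (f '' A) ≤ η (sdiam d A / t₀) * sdiam ρ (f '' B) := by
    apply Real.sSup_le _ (mul_nonneg hηnn hDfB0)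
    rintro r ⟨u, ⟨x, hxA, rfl⟩, v, ⟨a, haA, rfl⟩, rfl⟩
    -- limit argument: u → t₀ from below
    have h1 : Filter.Tendsto (fun u : ℝ => sdiam d A / u) (𝓝[<] t₀) (𝓝 (sdiam d A / t₀)) :=
      (tendsto_const_nhds.div tendsto_id ht₀pos.ne').mono_left nhdsWithin_le_nhds
    have hIoo : Set.Ioo (0 : ℝ) t₀ ∈ 𝓝[<] t₀ :=
      Ioo_mem_nhdsLT_of_mem ⟨ht₀pos, le_rfl⟩
    have h2 : Filter.Tendsto (fun u : ℝ => sdiam d A / u) (𝓝[<] t₀)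
        (𝓝[Set.Ici 0] (sdiam d A / t₀)) := by
      rw [tendsto_nhdsWithin_iff]
      refine ⟨h1, ?_⟩
      filter_upwards [hIoo] with u hu
      exact div_nonneg hDAnn hu.1.le
    have h3 : Filter.Tendsto (fun u : ℝ => η (sdiam d A / u) * sdiam ρ (f '' B)) (𝓝[<] t₀)
        (𝓝 (η (sdiam d A / t₀) * sdiam ρ (f '' B))) :=
      (Filter.Tendsto.comp (hη.continuousOn _ (Set.mem_Ici.mpr (div_nonneg hDAnn ht₀nn))) h2).mul_const _
    refine ge_of_tendsto h3 ?_
    filter_upwards [hIoo] with u hu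
    obtain ⟨b, hbB, hub⟩ := hkey x (hAB hxA) u hu.1.le hu.2
    have hdxa : d x a ≤ (sdiam d A / u) * d x b := by
      calc d x a ≤ sdiam d A := le_csSup hbddA ⟨x, hxA, a, haA, rfl⟩
        _ = (sdiam d A / u) * u := (div_mul_cancel₀ _ hu.1.ne').symm
        _ ≤ (sdiam d A / u) * d x b :=
            mul_le_mul_of_nonneg_left hub.le (div_nonneg hDAnn hu.1.le)
    have hq' := hqs x a b (sdiam d A / u) (div_pos hA hu.1) hdxa
    calc ρ (f x) (f a) ≤ η (sdiam d A / u) * ρ (f x) (f b) := hq'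
      _ ≤ η (sdiam d A / u) * sdiam ρ (f '' B) :=
          mul_le_mul_of_nonneg_left
            (le_csSup hbddB ⟨f x, ⟨x, hAB hxA, rfl⟩, f b, ⟨b, hbB, rfl⟩, rfl⟩)
            (hη.maps _ (div_nonneg hDAnn hu.1.le))
  rcases eq_or_lt_of_le hDfB0 with h0 | h0
  · rw [← h0, div_zero]; exact hηnn
  · rw [div_le_iff₀ h0]; exact hmain
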